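/- Let A be an n×n circulant matrix over a finite field F. Then A is semi-involutory if and only if there exist non-singular diagonal matrices D₁ and D₂ over F such that D₁ⁿ = k₁·I and D₂ⁿ = k₂·I for some non-zero scalars k₁, k₂ ∈ F, and A⁻¹ = D₁·A·D₂. -/

import Mathlib

open Matrix

/-- The `n × n` circulant matrix with first row `c₀, c₁, …, c_{n-1}`, i.e. the matrix whose
`(i,j)` entry is `c_{(j - i) mod n}`. -/
def circulantM {n : ℕ} {F : Type*} (c : Fin n → F) : Matrix (Fin n) (Fin n) F :=
  Matrix.of fun i j => c (j - i)

section Aux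

variable {n : ℕ} [NeZero n] {F : Type*} [Field F]

/-- The subgroup of "quasi-periods" of a nowhere-zero function `d : Fin n → F`. -/
private def Tsub (d : Fin n → F) (hd : ∀ i, d i ≠ 0) : AddSubgroup (Fin n) where
  carrier := {s | ∀ i, d (i + s) * d 0 = d s * d i}
  zero_mem' := by intro i; simp [mul_comm]
  add_mem' := by
    intro s t hs ht i
    have h1 := hs i
    have h2 := ht (i + s)
    have h3 := ht s
    apply mul_right_cancel₀ (hd 0)
    rw [← add_assoc]
    linear_combination d 0 * h2 + d t * h1 - d i * h3
  neg_mem' := by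
    intro s hs i
    have h0 := hs (-s)
    rw [neg_add_cancel] at h0
    have h1 := hs (i + -s)
    rw [neg_add_cancel_right] at h1
    apply mul_left_cancel₀ (hd s)
    linear_combination d i * h0 - d 0 * h1

private lemma mem_Tsub {d : Fin n → F} {hd : ∀ i, d i ≠ 0} {s : Fin n} :
    s ∈ Tsub d hd ↔ ∀ i, d (i + s) * d 0 = d s * d i := Iff.rfl

/-- The inverse of a circulant matrix is circulant. -/
private lemma circ_inv_circ (c : Fin n → F) (hdet : (circulantM c).det ≠ 0) :
    ∀ i j, (circulantM c)⁻¹ i j = (circulantM c)⁻¹ 0 (j - i) := by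
  intro i j
  have hu : IsUnit (circulantM c).det := isUnit_iff_ne_zero.mpr hdet
  have hsub : (circulantM c).submatrix (Equiv.addRight i) (Equiv.addRight i) = circulantM c := by
    ext a b
    show c ((b + i) - (a + i)) = c (b - a)
    rw [add_sub_add_right_eq_sub]
  have hone : ((circulantM c)⁻¹.submatrix (Equiv.addRight i) (Equiv.addRight i)) *
      circulantM c = 1 := by
    have h2 : ((circulantM c)⁻¹.submatrix (Equiv.addRight i) (Equiv.addRight i)) *
        (circulantM c).submatrix (Equiv.addRight i) (Equiv.addRight i) = 1 := by
      rw [Matrix.submatrix_mul_equiv, Matrix.nonsing_inv_mul _ hu, Matrix.submatrix_one_equiv]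
    rwa [hsub] at h2
  have hkey := Matrix.inv_eq_left_inv hone
  calc (circulantM c)⁻¹ i j
      = (circulantM c)⁻¹ (0 + i) (j - i + i) := by rw [zero_add, sub_add_cancel j i]
    _ = ((circulantM c)⁻¹.submatrix (Equiv.addRight i) (Equiv.addRight i)) 0 (j - i) := rfl
    _ = (circulantM c)⁻¹ 0 (j - i) := by rw [← hkey]

private lemma key_aux (c : Fin n → F) (hdet : (circulantM c).det ≠ 0)
    (d e : Fin n → F) (hd : ∀ i, d i ≠ 0) (he : ∀ i, e i ≠ 0)
    (hrel : ∀ i j, (circulantM c)⁻¹ i j = d i * c (j - i) * e j) :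
    ∃ (D₁ D₂ : Matrix (Fin n) (Fin n) F) (k₁ k₂ : F),
      D₁.IsDiag ∧ D₂.IsDiag ∧ D₁.det ≠ 0 ∧ D₂.det ≠ 0 ∧ k₁ ≠ 0 ∧ k₂ ≠ 0 ∧
      D₁ ^ n = k₁ • (1 : Matrix (Fin n) (Fin n) F) ∧
      D₂ ^ n = k₂ • (1 : Matrix (Fin n) (Fin n) F) ∧
      (circulantM c)⁻¹ = D₁ * circulantM c * D₂ := by
  have hB := circ_inv_circ c hdet
  obtain ⟨r₀, hr₀⟩ : ∃ r, c r ≠ 0 := by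
    by_contra h
    push_neg at h
    apply hdet
    have hz : circulantM c = 0 := by ext i j; exact h _
    rw [hz]
    exact Matrix.det_zero
  set q : F := d 0 * e r₀ with hqdef
  have hq : q ≠ 0 := mul_ne_zero (hd 0) (he r₀)
  -- the basic relation at offset r₀
  have key1 : ∀ i, d i * e (i + r₀) = q := by
    intro i
    have e1 : (circulantM c)⁻¹ i (i + r₀) = d i * c r₀ * e (i + r₀) := by
      have h := hrel i (i + r₀); rwa [add_sub_cancel_left i r₀] at h
    have e2 : (circulantM c)⁻¹ 0 r₀ = d 0 * c r₀ * e r₀ := by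
      have h := hrel 0 r₀; rwa [sub_zero] at h
    have e3 : d i * c r₀ * e (i + r₀) = d 0 * c r₀ * e r₀ := by
      rw [← e1, ← e2, hB i (i + r₀), add_sub_cancel_left i r₀]
    have e4 : (d i * e (i + r₀)) * c r₀ = q * c r₀ := by linear_combination e3
    exact mul_right_cancel₀ hr₀ e4
  have key1' : ∀ j, d (j - r₀) * e j = q := by
    intro j
    have h := key1 (j - r₀)
    rwa [sub_add_cancel j r₀] at h
  -- the subgroup of quasi-periods
  set T : AddSubgroup (Fin n) := Tsub d hd with hTdef
  have hΔT : ∀ r, c r ≠ 0 → r - r₀ ∈ T := by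
    intro r hr
    rw [hTdef, mem_Tsub]
    intro i
    -- first: d i * e (i + r) = d 0 * e r
    have e1 : d i * c r * e (i + r) = d 0 * c r * e r := by
      have a1 := hrel i (i + r); rw [add_sub_cancel_left i r] at a1
      have a2 := hrel 0 r; rw [sub_zero] at a2
      rw [← a1, ← a2, hB i (i + r), add_sub_cancel_left i r]
    have e2 : (d i * e (i + r)) * c r = (d 0 * e r) * c r := by linear_combination e1
    have hA2 : d i * e (i + r) = d 0 * e r := mul_right_cancel₀ hr e2
    have hB2 : d (i + (r - r₀)) * e (i + r) = q := by
      have h := key1' (i + r)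
      rwa [add_sub_assoc] at h
    have hC2 : d (r - r₀) * e r = q := key1' r
    have hgoal' : (d (i + (r - r₀)) * d 0) * (e (i + r) * e r) =
        (d (r - r₀) * d i) * (e (i + r) * e r) := by
      linear_combination (d 0 * e r) * hB2 - (d i * e (i + r)) * hC2 - q * hA2
    exact mul_right_cancel₀ (mul_ne_zero (he (i + r)) (he r)) hgoal'
  -- coset representatives
  set rep : Fin n → Fin n := fun i => (QuotientAddGroup.mk (s := T) i).out with hrepdef
  have hrepT : ∀ i, i - rep i ∈ T := fun i =>
    (QuotientAddGroup.eq_iff_sub_mem).mp (Quotient.out_eq _).symm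
  have hrepadd : ∀ i s, s ∈ T → rep (i + s) = rep i := by
    intro i s hs
    have : (QuotientAddGroup.mk (s := T) (i + s)) = QuotientAddGroup.mk (s := T) i := by
      rw [QuotientAddGroup.eq_iff_sub_mem, add_sub_cancel_left i s]
      exact hs
    simp only [hrepdef, this]
  -- iterated quasi-periodicity
  have hiter : ∀ (k : ℕ) (t : Fin n), t ∈ T → d (k • t) * d 0 ^ k = d t ^ k * d 0 := by
    intro k
    induction k with
    | zero => intro t _; simp [mul_comm]
    | succ k ih =>
      intro t ht
      have h1 := (mem_Tsub.mp ht) (k • t)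
      have h2 := ih t ht
      rw [succ_nsmul, pow_succ, pow_succ]
      linear_combination d 0 ^ k * h1 + d t * h2
  have hpown : ∀ t, t ∈ T → d t ^ n = d 0 ^ n := by
    intro t ht
    have hsm : n • t = 0 :=
      addOrderOf_dvd_iff_nsmul_eq_zero.mp (by simpa using addOrderOf_dvd_card (x := t))
    have h := hiter n t ht
    rw [hsm] at h
    have h' : d t ^ n * d 0 = d 0 ^ n * d 0 := by linear_combination -h
    exact mul_right_cancel₀ (hd 0) h'
  -- the new diagonal entries
  set d' : Fin n → F := fun i => d (i - rep i) / d 0 with hd'def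
  have hd' : ∀ i, d' i ≠ 0 := fun i => div_ne_zero (hd _) (hd 0)
  have hd'pow : ∀ i, d' i ^ n = 1 := by
    intro i
    rw [hd'def]
    simp only [div_pow]
    rw [hpown _ (hrepT i), div_self (pow_ne_zero n (hd 0))]
  have hstar : ∀ i s, s ∈ T →
      d (i - rep i) * d (i + s) = d i * d (i + s - rep (i + s)) := by
    intro i s hs
    rw [hrepadd i s hs, add_sub_right_comm i s (rep i)]
    have h1 := (mem_Tsub.mp hs) (i - rep i)
    have h2 := (mem_Tsub.mp hs) i
    apply mul_right_cancel₀ (hd 0)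
    linear_combination d (i - rep i) * h2 - d i * h1
  set e' : Fin n → F := fun j => q / d' (j - r₀) with he'def
  have he' : ∀ j, e' j ≠ 0 := fun j => div_ne_zero hq (hd' _)
  have he'pow : ∀ j, e' j ^ n = q ^ n := by
    intro j
    rw [he'def]
    simp only [div_pow]
    rw [hd'pow, div_one]
  refine ⟨Matrix.diagonal d', Matrix.diagonal e', 1, q ^ n,
    Matrix.isDiag_diagonal d', Matrix.isDiag_diagonal e', ?_, ?_, one_ne_zero,
    pow_ne_zero n hq, ?_, ?_, ?_⟩
  · rw [Matrix.det_diagonal]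
    exact Finset.prod_ne_zero_iff.mpr fun i _ => hd' i
  · rw [Matrix.det_diagonal]
    exact Finset.prod_ne_zero_iff.mpr fun j _ => he' j
  · rw [Matrix.diagonal_pow, one_smul]
    ext i j
    rcases eq_or_ne i j with rfl | hij
    · simp [Pi.pow_apply, hd'pow i]
    · simp [Matrix.diagonal_apply_ne _ hij, Matrix.one_apply_ne hij]
  · rw [Matrix.diagonal_pow]
    ext i j
    rcases eq_or_ne i j with rfl | hij
    · simp [Pi.pow_apply, he'pow i, Matrix.one_apply_eq]
    · simp [Matrix.diagonal_apply_ne _ hij, Matrix.one_apply_ne hij]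
  · ext i j
    have hDAD : (Matrix.diagonal d' * circulantM c * Matrix.diagonal e') i j =
        d' i * c (j - i) * e' j := by
      rw [Matrix.mul_diagonal, Matrix.diagonal_mul]
      rfl
    rw [hDAD, hrel i j]
    rcases eq_or_ne (c (j - i)) 0 with hc | hc
    · rw [hc]; ring
    · have hs : (j - i) - r₀ ∈ T := hΔT (j - i) hc
      have hid1 : i + ((j - i) - r₀) = j - r₀ := by abel
      have hkey : d (i - rep i) * d (j - r₀) = d i * d (j - r₀ - rep (j - r₀)) := by
        have h := hstar i ((j - i) - r₀) hs
        rwa [hid1] at h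
      have hejv : e j = q / d (j - r₀) := by
        rw [eq_div_iff (hd _)]
        linear_combination key1' j
      rw [hejv]
      simp only [hd'def, he'def]
      have h0 := hd 0
      have hu := hd (j - r₀)
      have hv := hd (j - r₀ - rep (j - r₀))
      field_simp
      linear_combination -hkey

end Aux

/-- Let `A` be an `n × n` circulant matrix over a finite field `F`. Then `A` is
semi-involutory (i.e. `A` is non-singular and there exist non-singular diagonal matrices
`D₁, D₂` with `A⁻¹ = D₁ * A * D₂`) if and only if there exist non-singular diagonal matrices
`D₁, D₂` such that `D₁ ^ n = k₁ • I` and `D₂ ^ n = k₂ • I` for some non-zero scalars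
`k₁, k₂ ∈ F`, and `A⁻¹ = D₁ * A * D₂`. -/
theorem circulant_semiInvolutory_iff {n : ℕ} {F : Type*} [Field F] [Fintype F]
    (c : Fin n → F) (A : Matrix (Fin n) (Fin n) F) (hA : A = circulantM c) :
    (A.det ≠ 0 ∧ ∃ D₁ D₂ : Matrix (Fin n) (Fin n) F,
        D₁.IsDiag ∧ D₂.IsDiag ∧ D₁.det ≠ 0 ∧ D₂.det ≠ 0 ∧ A⁻¹ = D₁ * A * D₂) ↔
    (A.det ≠ 0 ∧ ∃ (D₁ D₂ : Matrix (Fin n) (Fin n) F) (k₁ k₂ : F),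
        D₁.IsDiag ∧ D₂.IsDiag ∧ D₁.det ≠ 0 ∧ D₂.det ≠ 0 ∧ k₁ ≠ 0 ∧ k₂ ≠ 0 ∧
        D₁ ^ n = k₁ • (1 : Matrix (Fin n) (Fin n) F) ∧
        D₂ ^ n = k₂ • (1 : Matrix (Fin n) (Fin n) F) ∧
        A⁻¹ = D₁ * A * D₂) := by
  constructor
  · rintro ⟨hdet, D₁, D₂, h1, h2, hd1, hd2, hinv⟩
    refine ⟨hdet, ?_⟩
    rcases Nat.eq_zero_or_pos n with rfl | hn
    · exact ⟨1, 1, 1, 1, Matrix.isDiag_one, Matrix.isDiag_one, by simp, by simp,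
        one_ne_zero, one_ne_zero, by simp, by simp, by ext i j; exact i.elim0⟩
    · haveI : NeZero n := ⟨hn.ne'⟩
      subst hA
      obtain ⟨d, rfl⟩ : ∃ v, D₁ = Matrix.diagonal v := ⟨D₁.diag, (h1.diagonal_diag).symm⟩
      obtain ⟨e, rfl⟩ : ∃ v, D₂ = Matrix.diagonal v := ⟨D₂.diag, (h2.diagonal_diag).symm⟩
      rw [Matrix.det_diagonal] at hd1 hd2
      have hd : ∀ i, d i ≠ 0 := fun i =>
        (Finset.prod_ne_zero_iff.mp hd1) i (Finset.mem_univ i)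
      have he : ∀ i, e i ≠ 0 := fun i =>
        (Finset.prod_ne_zero_iff.mp hd2) i (Finset.mem_univ i)
      have hrel : ∀ i j, (circulantM c)⁻¹ i j = d i * c (j - i) * e j := by
        intro i j
        rw [hinv, Matrix.mul_diagonal, Matrix.diagonal_mul]
        rfl
      exact key_aux c hdet d e hd he hrel
  · rintro ⟨hdet, D₁, D₂, k₁, k₂, h1, h2, hd1, hd2, _, _, _, _, hinv⟩
    exact ⟨hdet, D₁, D₂, h1, h2, hd1, hd2, hinv⟩
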